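/- Let G be a finite cyclic group of order n ≥ 3 and H ≠ {e} a subgroup. Then the generalized non-coprime graph Γ_{G,H} is claw-free (contains no induced K_{1,3}) if and only if either (H = G and |G| has at most two distinct prime divisors) or (H ≠ G and G ≅ Z_4 or G ≅ Z_6). -/

import Mathlib

set_option linter.unusedSectionVars false
set_option maxHeartbeats 1000000

open Finset Subgroup

section Helpers

lemma three_le_card' {α : Type*} [DecidableEq α] {S : Finset α} {a b c : α}
    (ha : a ∈ S) (hb : b ∈ S) (hc : c ∈ S) (hab : a ≠ b) (hac : a ≠ c) (hbc : b ≠ c) :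
    3 ≤ S.card := by
  have h : ({a, b, c} : Finset α) ⊆ S := by
    intro x hx; simp at hx; rcases hx with rfl | rfl | rfl <;> assumption
  have hcard : ({a, b, c} : Finset α).card = 3 := by
    rw [Finset.card_insert_of_notMem (by simp [hab, hac]),
        Finset.card_insert_of_notMem (by simp [hbc]), Finset.card_singleton]
  calc 3 = ({a,b,c} : Finset α).card := hcard.symm
    _ ≤ S.card := Finset.card_le_card h

lemma two_le_card' {α : Type*} [DecidableEq α] {S : Finset α} {a b : α}
    (ha : a ∈ S) (hb : b ∈ S) (hab : a ≠ b) : 2 ≤ S.card := by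
  have h : ({a, b} : Finset α) ⊆ S := by
    intro x hx; simp at hx; rcases hx with rfl | rfl <;> assumption
  have hcard : ({a, b} : Finset α).card = 2 := by
    rw [Finset.card_insert_of_notMem (by simp [hab]), Finset.card_singleton]
  calc 2 = ({a,b} : Finset α).card := hcard.symm
    _ ≤ S.card := Finset.card_le_card h

lemma four_le_card' {α : Type*} [DecidableEq α] {S : Finset α} {v a b c : α}
    (hv : v ∈ S) (ha : a ∈ S) (hb : b ∈ S) (hc : c ∈ S)
    (hva : v ≠ a) (hvb : v ≠ b) (hvc : v ≠ c)
    (hab : a ≠ b) (hac : a ≠ c) (hbc : b ≠ c) :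
    4 ≤ S.card := by
  have h : ({v, a, b, c} : Finset α) ⊆ S := by
    intro x hx; simp at hx; rcases hx with rfl | rfl | rfl | rfl <;> assumption
  have hcard : ({v, a, b, c} : Finset α).card = 4 := by
    rw [Finset.card_insert_of_notMem (by simp [hva, hvb, hvc]),
        Finset.card_insert_of_notMem (by simp [hab, hac]),
        Finset.card_insert_of_notMem (by simp [hbc]), Finset.card_singleton]
  calc 4 = ({v, a, b, c} : Finset α).card := hcard.symm
    _ ≤ S.card := Finset.card_le_card h

lemma three_of_card' {α : Type*} [DecidableEq α] {S : Finset α} (h : 3 ≤ S.card) :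
    ∃ a b c, a ∈ S ∧ b ∈ S ∧ c ∈ S ∧ a ≠ b ∧ a ≠ c ∧ b ≠ c := by
  obtain ⟨a, ha⟩ := Finset.card_pos.mp (show 0 < S.card by omega)
  have h2 : 2 ≤ (S.erase a).card := by
    have := Finset.card_erase_of_mem ha; omega
  obtain ⟨b, hb⟩ := Finset.card_pos.mp (by omega : 0 < (S.erase a).card)
  have h1 : 1 ≤ ((S.erase a).erase b).card := by
    have := Finset.card_erase_of_mem hb; omega
  obtain ⟨c, hc⟩ := Finset.card_pos.mp (by omega : 0 < ((S.erase a).erase b).card)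
  refine ⟨a, b, c, ha, Finset.mem_of_mem_erase hb,
    Finset.mem_of_mem_erase (Finset.mem_of_mem_erase hc), ?_, ?_, ?_⟩
  · exact fun h => (Finset.ne_of_mem_erase hb) h.symm
  · exact fun h => (Finset.ne_of_mem_erase (Finset.mem_of_mem_erase hc)) h.symm
  · exact fun h => (Finset.ne_of_mem_erase hc) h.symm

lemma seven_le {n m : ℕ} (h3 : 3 ≤ n) (h4 : n ≠ 4) (h6 : n ≠ 6) (hm : m ∣ n)
    (hm2 : 2 ≤ m) (hmn : m < n) : 7 ≤ n := by
  by_contra h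
  push_neg at h
  interval_cases n <;> interval_cases m <;> omega

lemma dvd_six_cases {t : ℕ} (h : t ∣ 6) (h1 : t ≠ 1) : t = 2 ∨ t = 3 ∨ t = 6 := by
  have h0 : 0 < t := Nat.pos_of_dvd_of_pos h (by norm_num)
  have hle := Nat.le_of_dvd (by norm_num) h
  interval_cases t <;> omega

lemma dvd_six_cases' {m : ℕ} (h : m ∣ 6) (h1 : m ≠ 1) (hne : m ≠ 6) : m = 2 ∨ m = 3 := by
  rcases dvd_six_cases h h1 with h' | h' | h' <;> omega

lemma gcd_ne_one_of_dvd {p a b : ℕ} (hp : 2 ≤ p) (ha : p ∣ a) (hb : p ∣ b) :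
    Nat.gcd a b ≠ 1 := by
  intro h
  have := Nat.dvd_gcd ha hb
  rw [h] at this
  have := Nat.le_of_dvd Nat.one_pos this
  omega

lemma arith_aux {x y : ℕ} (hx : 2 ≤ x) (hy : 3 ≤ y) : x + y + 1 ≤ x * y := by
  have h1 : 3 * x ≤ y * x := Nat.mul_le_mul_right _ hy
  have h2 : 2 * y ≤ x * y := Nat.mul_le_mul_right _ hx
  nlinarith

lemma arith_key {n a b : ℕ} (h7 : 7 ≤ n) (ha : a ∣ n) (hb : b ∣ n)
    (han : a < n) (hbn : b < n) : 3 + a + b ≤ n + Nat.gcd a b := by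
  have hn0 : 0 < n := by omega
  have ha0 : 0 < a := Nat.pos_of_dvd_of_pos ha hn0
  have hb0 : 0 < b := Nat.pos_of_dvd_of_pos hb hn0
  have h2a : 2 * a ≤ n := by
    obtain ⟨k, hk⟩ := ha
    have : 2 ≤ k := by nlinarith
    nlinarith
  have h2b : 2 * b ≤ n := by
    obtain ⟨k, hk⟩ := hb
    have : 2 ≤ k := by nlinarith
    nlinarith
  by_cases hab : a ∣ b
  · rw [Nat.gcd_eq_left hab]; omega
  by_cases hba : b ∣ a
  · rw [Nat.gcd_eq_right hba]; omega
  have hc0 : 0 < Nat.gcd a b := Nat.gcd_pos_of_pos_left _ ha0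
  have hcop : Nat.Coprime (a / Nat.gcd a b) (b / Nat.gcd a b) :=
    Nat.coprime_div_gcd_div_gcd hc0
  obtain ⟨a', hca⟩ : Nat.gcd a b ∣ a := Nat.gcd_dvd_left a b
  obtain ⟨b', hcb⟩ : Nat.gcd a b ∣ b := Nat.gcd_dvd_right a b
  generalize hcdef : Nat.gcd a b = c at *
  have ha'' : a / c = a' := by rw [hca]; exact Nat.mul_div_cancel_left _ hc0
  have hb'' : b / c = b' := by rw [hcb]; exact Nat.mul_div_cancel_left _ hc0
  rw [ha'', hb''] at hcop
  have ha'2 : 2 ≤ a' := by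
    by_contra h
    have : a' = 1 := by nlinarith
    apply hab
    rw [hca, this, Nat.mul_one, ← hcdef]
    exact Nat.gcd_dvd_right a b
  have hb'2 : 2 ≤ b' := by
    by_contra h
    have : b' = 1 := by nlinarith
    apply hba
    rw [hcb, this, Nat.mul_one, ← hcdef]
    exact Nat.gcd_dvd_left a b
  have hlcm : Nat.lcm a b ∣ n := Nat.lcm_dvd ha hb
  have hlcm_eq : Nat.lcm a b = c * a' * b' := by
    have h := Nat.gcd_mul_lcm a b
    rw [hcdef] at h
    have h2 : c * (c * a' * b') = c * Nat.lcm a b := by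
      rw [h, hca, hcb]; ring
    exact (Nat.eq_of_mul_eq_mul_left hc0 h2).symm
  rw [hlcm_eq] at hlcm
  obtain ⟨k, hk⟩ := hlcm
  have hk0 : 0 < k := by
    rcases Nat.eq_zero_or_pos k with rfl | h
    · omega
    · exact h
  have hnotboth : ¬ (a' = 2 ∧ b' = 2) := by
    rintro ⟨rfl, rfl⟩
    simp [Nat.Coprime] at hcop
  rw [hca, hcb, hk]
  rcases Nat.lt_or_ge k 2 with hk1 | hk2
  · have hk1 : k = 1 := by omega
    subst hk1
    simp only [Nat.mul_one] at hk
    have key : a' + b' + 1 ≤ a' * b' := by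
      rcases Nat.lt_or_ge a' 3 with h3a | h3a
      · have ha2 : a' = 2 := by omega
        have hb3 : 3 ≤ b' := by
          by_contra h
          exact hnotboth ⟨ha2, by omega⟩
        rw [ha2]
        have := arith_aux (le_refl 2) hb3
        linarith
      · have h := arith_aux hb'2 h3a
        have h2 : b' * a' = a' * b' := Nat.mul_comm _ _
        linarith
    rcases Nat.lt_or_ge c 2 with hc1 | hc2
    · have hc1 : c = 1 := by omega
      subst hc1
      simp only [Nat.one_mul] at hk ⊢
      have hab7 : 7 ≤ a' * b' := by omega
      rcases Nat.lt_or_ge a' 3 with h3a | h3a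
      · have ha2 : a' = 2 := by omega
        subst ha2
        omega
      rcases Nat.lt_or_ge b' 3 with h3b | h3b
      · have hb2 : b' = 2 := by omega
        subst hb2
        omega
      · have h1 : 3 * b' ≤ a' * b' := Nat.mul_le_mul_right _ h3a
        have h2 : 3 * a' ≤ b' * a' := Nat.mul_le_mul_right _ h3b
        have h3 : b' * a' = a' * b' := Nat.mul_comm _ _
        linarith
    · have hmul : c * (a' + b' + 1) ≤ c * (a' * b') := Nat.mul_le_mul (le_refl c) key
      have hexp : c * (a' + b' + 1) = c * a' + c * b' + c := by ring
      have hexp2 : c * (a' * b') = c * a' * b' * 1 := by ring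
      linarith
  · have h1 : c * a' * 2 ≤ c * a' * b' := Nat.mul_le_mul (le_refl (c * a')) hb'2
    have h2 : c * b' * 2 ≤ c * b' * a' := Nat.mul_le_mul (le_refl (c * b')) ha'2
    have h2' : c * b' * a' = c * a' * b' := by ring
    have h3 : c * a' * b' * 2 ≤ c * a' * b' * k := Nat.mul_le_mul (le_refl _) hk2
    have h4 : 1 * 2 ≤ c * a' := Nat.mul_le_mul hc0 ha'2
    have h5 : 1 * 2 ≤ c * b' := Nat.mul_le_mul hc0 hb'2
    linarith

end Helpers

section GroupHelpers

variable {G : Type*} [Group G] [Fintype G]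

lemma filter_mem_card [DecidableEq G] (K : Subgroup G) [DecidablePred (· ∈ K)] :
    (Finset.univ.filter (· ∈ K)).card = Nat.card K := by
  rw [Nat.card_eq_fintype_card]
  exact (Fintype.card_subtype _).symm

lemma pow_card_subgroup {K : Subgroup G} {y : G} (hy : y ∈ K) : y ^ Nat.card K = 1 := by
  have h := congrArg (Subtype.val) (pow_card_eq_one' (G := K) (x := ⟨y, hy⟩))
  simp only [SubmonoidClass.coe_pow, OneMemClass.coe_one] at h
  exact h

lemma mem_of_pow_card_eq_one (hG : IsCyclic G) (H : Subgroup G) {x : G}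
    (hx : x ^ Nat.card H = 1) : x ∈ H := by
  classical
  set m := Nat.card H with hm
  have hm0 : 0 < m := Nat.card_pos
  set A := Finset.univ.filter (fun y : G => y ^ m = 1) with hA
  set B := Finset.univ.filter (· ∈ H) with hB
  have hBA : B ⊆ A := by
    intro y hy
    simp only [hB, Finset.mem_filter, Finset.mem_univ, true_and] at hy
    simp only [hA, Finset.mem_filter, Finset.mem_univ, true_and]
    exact pow_card_subgroup hy
  have hcardB : B.card = m := filter_mem_card H
  have hcardA : A.card ≤ m := by
    have := IsCyclic.card_pow_eq_one_le (α := G) hm0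
    convert this using 2
  have hBAeq : B = A := Finset.eq_of_subset_of_card_le hBA (by omega)
  have hxA : x ∈ A := by
    simp only [hA, Finset.mem_filter, Finset.mem_univ, true_and]; exact hx
  rw [← hBAeq] at hxA
  simpa [hB] using hxA

lemma mem_iff_orderOf_dvd (hG : IsCyclic G) (H : Subgroup G) (x : G) :
    x ∈ H ↔ orderOf x ∣ Nat.card H := by
  constructor
  · intro hx
    exact orderOf_dvd_of_pow_eq_one (pow_card_subgroup hx)
  · intro hx
    exact mem_of_pow_card_eq_one hG H (orderOf_dvd_iff_pow_eq_one.mp hx)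

lemma exists_orderOf_eq (hG : IsCyclic G) {d : ℕ} (hd : d ∣ Fintype.card G) (hd0 : 0 < d) :
    ∃ x : G, orderOf x = d := by
  classical
  have h := IsCyclic.card_orderOf_eq_totient (α := G) hd
  have hpos : 0 < (Nat.totient d) := Nat.totient_pos.mpr hd0
  have hne : ({a : G | orderOf a = d} : Finset G).Nonempty := by
    rw [← Finset.card_pos, h]; exact hpos
  obtain ⟨x, hx⟩ := hne
  simp only [Finset.mem_filter] at hx
  exact ⟨x, hx.2⟩

lemma card_pow_eq_one_eq (hG : IsCyclic G) [DecidableEq G] {d : ℕ}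
    (hd : d ∣ Fintype.card G) (hd0 : 0 < d) :
    (Finset.univ.filter (fun x : G => x ^ d = 1)).card = d := by
  classical
  refine le_antisymm ?_ ?_
  · have := IsCyclic.card_pow_eq_one_le (α := G) hd0
    convert this using 2
  · obtain ⟨x, hx⟩ := exists_orderOf_eq hG hd hd0
    have hcard : Nat.card (Subgroup.zpowers x) = d := by
      rw [Nat.card_zpowers, hx]
    have hsub : (Finset.univ.filter (· ∈ Subgroup.zpowers x)) ⊆
        (Finset.univ.filter (fun x : G => x ^ d = 1)) := by
      intro y hy
      simp only [Finset.mem_filter, Finset.mem_univ, true_and] at hy ⊢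
      rw [← hcard]; exact pow_card_subgroup hy
    calc d = Nat.card (Subgroup.zpowers x) := hcard.symm
      _ = (Finset.univ.filter (· ∈ Subgroup.zpowers x)).card := (filter_mem_card _).symm
      _ ≤ _ := Finset.card_le_card hsub

lemma incl_excl (hG : IsCyclic G) [DecidableEq G] {a b : ℕ}
    (ha : a ∣ Fintype.card G) (hb : b ∣ Fintype.card G) (ha0 : 0 < a) (hb0 : 0 < b) :
    (Finset.univ.filter (fun x : G => ¬ x ^ a = 1 ∧ ¬ x ^ b = 1)).card + a + b =
      Fintype.card G + Nat.gcd a b := by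
  classical
  set A := Finset.univ.filter (fun x : G => x ^ a = 1) with hA
  set B := Finset.univ.filter (fun x : G => x ^ b = 1) with hB
  have hcA : A.card = a := card_pow_eq_one_eq hG ha ha0
  have hcB : B.card = b := card_pow_eq_one_eq hG hb hb0
  have hgd : Nat.gcd a b ∣ Fintype.card G := (Nat.gcd_dvd_left a b).trans ha
  have hg0 : 0 < Nat.gcd a b := Nat.gcd_pos_of_pos_left _ ha0
  have hAB : A ∩ B = Finset.univ.filter (fun x : G => x ^ Nat.gcd a b = 1) := by
    ext x
    simp only [hA, hB, Finset.mem_inter, Finset.mem_filter, Finset.mem_univ, true_and]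
    constructor
    · rintro ⟨h1, h2⟩
      exact orderOf_dvd_iff_pow_eq_one.mp
        (Nat.dvd_gcd (orderOf_dvd_of_pow_eq_one h1) (orderOf_dvd_of_pow_eq_one h2))
    · intro h
      have hdvd := orderOf_dvd_of_pow_eq_one h
      exact ⟨orderOf_dvd_iff_pow_eq_one.mp (hdvd.trans (Nat.gcd_dvd_left a b)),
        orderOf_dvd_iff_pow_eq_one.mp (hdvd.trans (Nat.gcd_dvd_right a b))⟩
  have hcAB : (A ∩ B).card = Nat.gcd a b := by
    rw [hAB]; exact card_pow_eq_one_eq hG hgd hg0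
  have hS : Finset.univ.filter (fun x : G => ¬ x ^ a = 1 ∧ ¬ x ^ b = 1) =
      Finset.univ \ (A ∪ B) := by
    ext x
    simp only [hA, hB, Finset.mem_filter, Finset.mem_univ, true_and, Finset.mem_sdiff,
      Finset.mem_union, not_or]
  have hsub : A ∪ B ⊆ Finset.univ := Finset.subset_univ _
  have hcard : (Finset.univ \ (A ∪ B)).card = Fintype.card G - (A ∪ B).card := by
    rw [Finset.card_sdiff_of_subset hsub, Finset.card_univ]
  have hie := Finset.card_union_add_card_inter A B
  have hle : (A ∪ B).card ≤ Fintype.card G := by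
    calc (A ∪ B).card ≤ Finset.univ.card := Finset.card_le_card hsub
      _ = Fintype.card G := Finset.card_univ
  rw [hS, hcard]
  omega

lemma no_two_of_order (hG : IsCyclic G) {d : ℕ} (hd : d ∣ Fintype.card G)
    (ht : Nat.totient d ≤ 1) {x y : G} (hx : orderOf x = d) (hy : orderOf y = d)
    (hxy : x ≠ y) : False := by
  classical
  have h := IsCyclic.card_orderOf_eq_totient (α := G) hd
  have h2 := two_le_card' (S := ({a : G | orderOf a = d} : Finset G))
    (by simp [hx]) (by simp [hy]) hxy
  omega

lemma no_three_of_order (hG : IsCyclic G) {d : ℕ} (hd : d ∣ Fintype.card G)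
    (ht : Nat.totient d ≤ 2) {x y z : G} (hx : orderOf x = d) (hy : orderOf y = d)
    (hz : orderOf z = d) (hxy : x ≠ y) (hxz : x ≠ z) (hyz : y ≠ z) : False := by
  classical
  have h := IsCyclic.card_orderOf_eq_totient (α := G) hd
  have h3 := three_le_card' (S := ({a : G | orderOf a = d} : Finset G))
    (by simp [hx]) (by simp [hy]) (by simp [hz]) hxy hxz hyz
  omega

end GroupHelpers

/-- The generalized non-coprime graph of a group `G` with respect to a subgroup `H`:
vertices are the non-identity elements of `G`, and distinct vertices `a`, `b` are
adjacent iff `gcd(|a|,|b|) ≠ 1` and `a ∈ H` or `b ∈ H`. -/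
def genNonCoprimeGraph (G : Type*) [Group G] (H : Subgroup G) :
    SimpleGraph {x : G // x ≠ 1} where
  Adj a b := a ≠ b ∧ Nat.gcd (orderOf (a : G)) (orderOf (b : G)) ≠ 1 ∧
    ((a : G) ∈ H ∨ (b : G) ∈ H)
  symm := by
    constructor
    intro a b h
    exact ⟨h.1.symm, by rw [Nat.gcd_comm]; exact h.2.1, h.2.2.symm⟩
  loopless := by
    constructor
    intro a h
    exact h.1 rfl

lemma adj_iff {G : Type*} [Group G] (H : Subgroup G) (a b : {x : G // x ≠ 1}) :
    (genNonCoprimeGraph G H).Adj a b ↔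
      a ≠ b ∧ Nat.gcd (orderOf (a : G)) (orderOf (b : G)) ≠ 1 ∧
        ((a : G) ∈ H ∨ (b : G) ∈ H) := Iff.rfl

theorem clawFree_iff {G : Type*} [Group G] [Fintype G]
    (hG : IsCyclic G) (hn : 3 ≤ Fintype.card G)
    (H : Subgroup G) (hH : H ≠ ⊥) :
    (¬ ∃ v a b c : {g : G // g ≠ 1}, a ≠ b ∧ a ≠ c ∧ b ≠ c ∧
        (genNonCoprimeGraph G H).Adj v a ∧ (genNonCoprimeGraph G H).Adj v b ∧
        (genNonCoprimeGraph G H).Adj v c ∧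
        ¬ (genNonCoprimeGraph G H).Adj a b ∧ ¬ (genNonCoprimeGraph G H).Adj a c ∧
        ¬ (genNonCoprimeGraph G H).Adj b c) ↔
      (H = ⊤ ∧ (Fintype.card G).primeFactors.card ≤ 2) ∨
      (H ≠ ⊤ ∧ (Fintype.card G = 4 ∨ Fintype.card G = 6)) := by
  classical
  have hn0 : Fintype.card G ≠ 0 := by omega
  constructor
  · intro hclaw
    by_cases hT : H = ⊤
    · -- show at most two prime factors
      refine Or.inl ⟨hT, ?_⟩
      by_contra h3p
      push_neg at h3p
      obtain ⟨p, q, r, hpm, hqm, hrm, hpq, hpr, hqr⟩ :=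
        three_of_card' (show 3 ≤ (Fintype.card G).primeFactors.card by omega)
      have hp := Nat.prime_of_mem_primeFactors hpm
      have hq := Nat.prime_of_mem_primeFactors hqm
      have hr := Nat.prime_of_mem_primeFactors hrm
      have hpd := Nat.dvd_of_mem_primeFactors hpm
      have hqd := Nat.dvd_of_mem_primeFactors hqm
      have hrd := Nat.dvd_of_mem_primeFactors hrm
      have cpq : Nat.Coprime p q := (Nat.coprime_primes hp hq).mpr hpq
      have cpr : Nat.Coprime p r := (Nat.coprime_primes hp hr).mpr hpr
      have cqr : Nat.Coprime q r := (Nat.coprime_primes hq hr).mpr hqr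
      have hpqd : p * q ∣ Fintype.card G := Nat.Coprime.mul_dvd_of_dvd_of_dvd cpq hpd hqd
      have cpq_r : Nat.Coprime (p * q) r := Nat.Coprime.mul cpr cqr
      have hpqrd : p * q * r ∣ Fintype.card G :=
        Nat.Coprime.mul_dvd_of_dvd_of_dvd cpq_r hpqd hrd
      obtain ⟨x, hx⟩ := exists_orderOf_eq hG hpd hp.pos
      obtain ⟨y, hy⟩ := exists_orderOf_eq hG hqd hq.pos
      obtain ⟨z, hz⟩ := exists_orderOf_eq hG hrd hr.pos
      obtain ⟨w, hw⟩ := exists_orderOf_eq hG hpqrd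
        (Nat.mul_pos (Nat.mul_pos hp.pos hq.pos) hr.pos)
      have hx1 : x ≠ 1 := by intro h; rw [h, orderOf_one] at hx; have := hp.two_le; omega
      have hy1 : y ≠ 1 := by intro h; rw [h, orderOf_one] at hy; have := hq.two_le; omega
      have hz1 : z ≠ 1 := by intro h; rw [h, orderOf_one] at hz; have := hr.two_le; omega
      have hqr4 : 1 < q * r := by
        have := Nat.mul_le_mul hq.two_le hr.two_le; linarith
      have hpr4 : 1 < p * r := by
        have := Nat.mul_le_mul hp.two_le hr.two_le; linarith
      have hpq4 : 1 < p * q := by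
        have := Nat.mul_le_mul hp.two_le hq.two_le; linarith
      have hpqr2 : p < p * q * r := by
        rw [mul_assoc]; exact (lt_mul_iff_one_lt_right hp.pos).mpr hqr4
      have hqqr2 : q < p * q * r := by
        have heq : p * q * r = q * (p * r) := by ring
        rw [heq]; exact (lt_mul_iff_one_lt_right hq.pos).mpr hpr4
      have hrqr2 : r < p * q * r := by
        have heq : p * q * r = r * (p * q) := by ring
        rw [heq]; exact (lt_mul_iff_one_lt_right hr.pos).mpr hpq4
      have hw1 : w ≠ 1 := by
        intro h; rw [h, orderOf_one] at hw
        have := hp.two_le; omega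
      have neOrd : ∀ {s t : G}, orderOf s ≠ orderOf t → s ≠ t := by
        intro s t hne h; exact hne (by rw [h])
      have hmem : ∀ u : G, u ∈ H := by intro u; rw [hT]; exact Subgroup.mem_top u
      refine hclaw ⟨⟨w, hw1⟩, ⟨x, hx1⟩, ⟨y, hy1⟩, ⟨z, hz1⟩, ?_, ?_, ?_, ?_, ?_, ?_, ?_, ?_, ?_⟩
      · exact Subtype.coe_ne_coe.mp (neOrd (by rw [hx, hy]; exact fun h => hpq h))
      · exact Subtype.coe_ne_coe.mp (neOrd (by rw [hx, hz]; exact fun h => hpr h))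
      · exact Subtype.coe_ne_coe.mp (neOrd (by rw [hy, hz]; exact fun h => hqr h))
      · exact ⟨Subtype.coe_ne_coe.mp (neOrd (by rw [hw, hx]; omega)),
          show Nat.gcd (orderOf w) (orderOf x) ≠ 1 by
            rw [hw, hx]
            exact gcd_ne_one_of_dvd hp.two_le ⟨q * r, by ring⟩ (dvd_refl p),
          Or.inl (hmem w)⟩
      · exact ⟨Subtype.coe_ne_coe.mp (neOrd (by rw [hw, hy]; omega)),
          show Nat.gcd (orderOf w) (orderOf y) ≠ 1 by
            rw [hw, hy]
            exact gcd_ne_one_of_dvd hq.two_le ⟨p * r, by ring⟩ (dvd_refl q),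
          Or.inl (hmem w)⟩
      · exact ⟨Subtype.coe_ne_coe.mp (neOrd (by rw [hw, hz]; omega)),
          show Nat.gcd (orderOf w) (orderOf z) ≠ 1 by
            rw [hw, hz]
            exact gcd_ne_one_of_dvd hr.two_le ⟨p * q, by ring⟩ (dvd_refl r),
          Or.inl (hmem w)⟩
      · rintro ⟨-, hg, -⟩
        exact hg (show Nat.gcd (orderOf x) (orderOf y) = 1 by rw [hx, hy]; exact cpq)
      · rintro ⟨-, hg, -⟩
        exact hg (show Nat.gcd (orderOf x) (orderOf z) = 1 by rw [hx, hz]; exact cpr)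
      · rintro ⟨-, hg, -⟩
        exact hg (show Nat.gcd (orderOf y) (orderOf z) = 1 by rw [hy, hz]; exact cqr)
    · refine Or.inr ⟨hT, ?_⟩
      by_contra h46
      push_neg at h46
      obtain ⟨hne4, hne6⟩ := h46
      have hmdvd : Nat.card H ∣ Fintype.card G := by
        have := Subgroup.card_subgroup_dvd_card H
        simpa [Nat.card_eq_fintype_card] using this
      have hm1 : Nat.card H ≠ 1 := fun h => hH (Subgroup.card_eq_one.mp h)
      have hm0 : (0 : ℕ) < Nat.card H := Nat.card_pos
      have hmne : Nat.card H ≠ Fintype.card G := by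
        intro h
        exact hT (Subgroup.eq_top_of_card_eq H (by rw [h, Nat.card_eq_fintype_card]))
      have hmlt : Nat.card H < Fintype.card G :=
        lt_of_le_of_ne (Nat.le_of_dvd (by omega) hmdvd) hmne
      have hn7 : 7 ≤ Fintype.card G := seven_le hn hne4 hne6 hmdvd (by omega) hmlt
      have hp : (Nat.card H).minFac.Prime := Nat.minFac_prime hm1
      have hpm : (Nat.card H).minFac ∣ Nat.card H := Nat.minFac_dvd _
      have hpn : (Nat.card H).minFac ∣ Fintype.card G := hpm.trans hmdvd
      have hbdvd : ordCompl[(Nat.card H).minFac] (Fintype.card G) ∣ Fintype.card G :=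
        Nat.ordCompl_dvd _ _
      have hpb : ¬ (Nat.card H).minFac ∣ ordCompl[(Nat.card H).minFac] (Fintype.card G) :=
        Nat.not_dvd_ordCompl hp hn0
      have hb0 : 0 < ordCompl[(Nat.card H).minFac] (Fintype.card G) :=
        Nat.ordCompl_pos _ hn0
      have hblt : ordCompl[(Nat.card H).minFac] (Fintype.card G) < Fintype.card G := by
        apply Nat.div_lt_self (by omega)
        exact one_lt_pow' hp.one_lt
          (Nat.Prime.factorization_pos_of_dvd hp hn0 hpn).ne'
      have harith := arith_key hn7 hmdvd hbdvd hmlt hblt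
      have hcount := incl_excl hG hmdvd hbdvd hm0 hb0
      obtain ⟨x, y, z, hxS, hyS, hzS, hxy, hxz, hyz⟩ :=
        three_of_card' (show 3 ≤ (Finset.univ.filter (fun x : G =>
          ¬ x ^ Nat.card H = 1 ∧
            ¬ x ^ (ordCompl[(Nat.card H).minFac] (Fintype.card G)) = 1)).card by omega)
      simp only [Finset.mem_filter, Finset.mem_univ, true_and] at hxS hyS hzS
      have prop : ∀ {u : G},
          (¬ u ^ Nat.card H = 1 ∧
            ¬ u ^ (ordCompl[(Nat.card H).minFac] (Fintype.card G)) = 1) →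
          u ≠ 1 ∧ u ∉ H ∧ (Nat.card H).minFac ∣ orderOf u := by
        rintro u ⟨hu1, hu2⟩
        refine ⟨?_, ?_, ?_⟩
        · intro h; apply hu1; rw [h]; exact one_pow _
        · intro h; exact hu1 (pow_card_subgroup h)
        · by_contra hnd
          have hcop : Nat.Coprime (orderOf u)
              ((Nat.card H).minFac ^ (Fintype.card G).factorization (Nat.card H).minFac) :=
            Nat.Coprime.pow_right _ (Nat.coprime_comm.mp ((hp.coprime_iff_not_dvd).mpr hnd))
          have hord : orderOf u ∣
              ((Nat.card H).minFac ^ (Fintype.card G).factorization (Nat.card H).minFac) *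
                ordCompl[(Nat.card H).minFac] (Fintype.card G) := by
            rw [Nat.ordProj_mul_ordCompl_eq_self]
            exact orderOf_dvd_card
          have : orderOf u ∣ ordCompl[(Nat.card H).minFac] (Fintype.card G) :=
            hcop.dvd_of_dvd_mul_left hord
          exact hu2 (orderOf_dvd_iff_pow_eq_one.mp this)
      obtain ⟨hx1, hxH, hxp⟩ := prop hxS
      obtain ⟨hy1, hyH, hyp⟩ := prop hyS
      obtain ⟨hz1, hzH, hzp⟩ := prop hzS
      obtain ⟨h0, hh0⟩ := exists_orderOf_eq hG hpn hp.pos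
      have hhH : h0 ∈ H := (mem_iff_orderOf_dvd hG H h0).mpr (by rw [hh0]; exact hpm)
      have hh1 : h0 ≠ 1 := by
        intro h; rw [h, orderOf_one] at hh0
        have := hp.two_le; omega
      refine hclaw ⟨⟨h0, hh1⟩, ⟨x, hx1⟩, ⟨y, hy1⟩, ⟨z, hz1⟩,
        Subtype.coe_ne_coe.mp hxy, Subtype.coe_ne_coe.mp hxz, Subtype.coe_ne_coe.mp hyz,
        ?_, ?_, ?_, ?_, ?_, ?_⟩
      · exact ⟨Subtype.coe_ne_coe.mp (show h0 ≠ x from fun h => hxH (h ▸ hhH)),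
          show Nat.gcd (orderOf h0) (orderOf x) ≠ 1 by
            rw [hh0]; exact gcd_ne_one_of_dvd hp.two_le (dvd_refl _) hxp,
          Or.inl hhH⟩
      · exact ⟨Subtype.coe_ne_coe.mp (show h0 ≠ y from fun h => hyH (h ▸ hhH)),
          show Nat.gcd (orderOf h0) (orderOf y) ≠ 1 by
            rw [hh0]; exact gcd_ne_one_of_dvd hp.two_le (dvd_refl _) hyp,
          Or.inl hhH⟩
      · exact ⟨Subtype.coe_ne_coe.mp (show h0 ≠ z from fun h => hzH (h ▸ hhH)),
          show Nat.gcd (orderOf h0) (orderOf z) ≠ 1 by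
            rw [hh0]; exact gcd_ne_one_of_dvd hp.two_le (dvd_refl _) hzp,
          Or.inl hhH⟩
      · rintro ⟨-, -, hor⟩
        rcases hor with h | h
        · exact hxH h
        · exact hyH h
      · rintro ⟨-, -, hor⟩
        rcases hor with h | h
        · exact hxH h
        · exact hzH h
      · rintro ⟨-, -, hor⟩
        rcases hor with h | h
        · exact hyH h
        · exact hzH h
  · rintro (⟨hT, hp2⟩ | ⟨hT, h46⟩)
    · -- H = ⊤, at most two primes : claw-free
      rintro ⟨v, a, b, c, hab, hac, hbc, hva, hvb, hvc, hnab, hnac, hnbc⟩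
      subst hT
      have mem : ∀ x : G, x ∈ (⊤ : Subgroup G) := fun x => Subgroup.mem_top x
      have gcdab : Nat.gcd (orderOf (a : G)) (orderOf (b : G)) = 1 := by
        by_contra hg
        exact hnab ⟨hab, hg, Or.inl (mem _)⟩
      have gcdac : Nat.gcd (orderOf (a : G)) (orderOf (c : G)) = 1 := by
        by_contra hg
        exact hnac ⟨hac, hg, Or.inl (mem _)⟩
      have gcdbc : Nat.gcd (orderOf (b : G)) (orderOf (c : G)) = 1 := by
        by_contra hg
        exact hnbc ⟨hbc, hg, Or.inl (mem _)⟩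
      have orda1 : orderOf (a : G) ≠ 1 := fun h => a.2 (orderOf_eq_one_iff.mp h)
      have ordb1 : orderOf (b : G) ≠ 1 := fun h => b.2 (orderOf_eq_one_iff.mp h)
      have ordc1 : orderOf (c : G) ≠ 1 := fun h => c.2 (orderOf_eq_one_iff.mp h)
      have hpa : (orderOf (a : G)).minFac.Prime := Nat.minFac_prime orda1
      have hpb : (orderOf (b : G)).minFac.Prime := Nat.minFac_prime ordb1
      have hpc : (orderOf (c : G)).minFac.Prime := Nat.minFac_prime ordc1
      have hpan : (orderOf (a : G)).minFac ∈ (Fintype.card G).primeFactors :=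
        Nat.mem_primeFactors.mpr ⟨hpa, (Nat.minFac_dvd _).trans orderOf_dvd_card, hn0⟩
      have hpbn : (orderOf (b : G)).minFac ∈ (Fintype.card G).primeFactors :=
        Nat.mem_primeFactors.mpr ⟨hpb, (Nat.minFac_dvd _).trans orderOf_dvd_card, hn0⟩
      have hpcn : (orderOf (c : G)).minFac ∈ (Fintype.card G).primeFactors :=
        Nat.mem_primeFactors.mpr ⟨hpc, (Nat.minFac_dvd _).trans orderOf_dvd_card, hn0⟩
      have key : ∀ {x y : G}, orderOf x ≠ 1 → Nat.gcd (orderOf x) (orderOf y) = 1 →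
          (orderOf x).minFac ≠ (orderOf y).minFac := by
        intro x y hx1 hg heq
        have hdvd : (orderOf x).minFac ∣ Nat.gcd (orderOf x) (orderOf y) :=
          Nat.dvd_gcd (Nat.minFac_dvd _) (heq ▸ Nat.minFac_dvd _)
        rw [hg] at hdvd
        have h1 := Nat.le_of_dvd Nat.one_pos hdvd
        have h2 := (Nat.minFac_prime hx1).two_le
        omega
      have hcard := three_le_card' hpan hpbn hpcn (key orda1 gcdab) (key orda1 gcdac)
        (key ordb1 gcdbc)
      omega
    · rcases h46 with h4 | h6
      · -- card G = 4
        rintro ⟨v, a, b, c, hab, hac, hbc, hva, hvb, hvc, hnab, hnac, hnbc⟩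
        have hva1 : v ≠ a := hva.1
        have hvb1 : v ≠ b := hvb.1
        have hvc1 : v ≠ c := hvc.1
        have hcard3 : Fintype.card {g : G // g ≠ 1} = 3 := by
          have h := Fintype.card_subtype_compl (fun x : G => x = 1)
          have h1 : Fintype.card {x : G // x = 1} = 1 := Fintype.card_subtype_eq (1 : G)
          rw [h1, h4] at h
          exact h
        have h4le := four_le_card' (S := (Finset.univ : Finset {g : G // g ≠ 1}))
          (Finset.mem_univ _) (Finset.mem_univ _) (Finset.mem_univ _) (Finset.mem_univ _)
          hva1 hvb1 hvc1 hab hac hbc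
        rw [Finset.card_univ, hcard3] at h4le
        omega
      · -- card G = 6
        rintro ⟨v, a, b, c, hab, hac, hbc, hva, hvb, hvc, hnab, hnac, hnbc⟩
        obtain ⟨hva1, hva2, hva3⟩ := hva
        obtain ⟨hvb1, hvb2, hvb3⟩ := hvb
        obtain ⟨hvc1, hvc2, hvc3⟩ := hvc
        have hmdvd : Nat.card H ∣ 6 := by
          have := Subgroup.card_subgroup_dvd_card H
          simpa [Nat.card_eq_fintype_card, h6] using this
        have hm1 : Nat.card H ≠ 1 := fun h => hH (Subgroup.card_eq_one.mp h)
        have hmne : Nat.card H ≠ 6 := by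
          intro h
          exact hT (Subgroup.eq_top_of_card_eq H (by rw [h, Nat.card_eq_fintype_card, h6]))
        have hm23 := dvd_six_cases' hmdvd hm1 hmne
        have hord1 : ∀ u : {g : G // g ≠ 1}, orderOf (u : G) ≠ 1 :=
          fun u h => u.2 (orderOf_eq_one_iff.mp h)
        have hdvd6 : ∀ u : {g : G // g ≠ 1},
            orderOf (u : G) = 2 ∨ orderOf (u : G) = 3 ∨ orderOf (u : G) = 6 :=
          fun u => dvd_six_cases (h6 ▸ orderOf_dvd_card) (hord1 u)
        have hmem : ∀ u : G, u ∈ H ↔ orderOf u ∣ Nat.card H := mem_iff_orderOf_dvd hG H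
        have d2 : (2:ℕ) ∣ Fintype.card G := by rw [h6]; norm_num
        have d3 : (3:ℕ) ∣ Fintype.card G := by rw [h6]; norm_num
        have d6 : (6:ℕ) ∣ Fintype.card G := by rw [h6]
        have tot2 : Nat.totient 2 ≤ 1 := by decide
        have tot3 : Nat.totient 3 ≤ 2 := by decide
        have tot6 : Nat.totient 6 ≤ 2 := by decide
        rcases hm23 with hm2 | hm3
        · by_cases hv2 : orderOf (v : G) = 2
          · have leaf : ∀ u : {g : G // g ≠ 1},
                Nat.gcd (orderOf (v : G)) (orderOf (u : G)) ≠ 1 → v ≠ u →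
                orderOf (u : G) = 6 := by
              intro u hg hvu
              have h2d : 2 ∣ orderOf (u : G) := by
                rw [hv2] at hg
                have hd2 : Nat.gcd 2 (orderOf (u : G)) ∣ 2 := Nat.gcd_dvd_left _ _
                rcases (Nat.dvd_prime Nat.prime_two).mp hd2 with h' | h'
                · exact absurd h' hg
                · exact h' ▸ Nat.gcd_dvd_right _ _
              rcases hdvd6 u with h2 | h3 | h66
              · exact (no_two_of_order hG d2 tot2 hv2 h2 (Subtype.coe_ne_coe.mpr hvu)).elim
              · rw [h3] at h2d; omega
              · exact h66
            exact no_three_of_order hG d6 tot6 (leaf a hva2 hva1) (leaf b hvb2 hvb1)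
              (leaf c hvc2 hvc1) (Subtype.coe_ne_coe.mpr hab) (Subtype.coe_ne_coe.mpr hac)
              (Subtype.coe_ne_coe.mpr hbc)
          · have leafH : ∀ u : {g : G // g ≠ 1},
                ((v : G) ∈ H ∨ (u : G) ∈ H) → orderOf (u : G) = 2 := by
              intro u hor
              rcases hor with h | h
              · exfalso
                have hdv := (hmem _).mp h; rw [hm2] at hdv
                rcases (Nat.dvd_prime Nat.prime_two).mp hdv with h' | h'
                · exact hord1 v h'
                · exact hv2 h'
              · have hdv := (hmem _).mp h; rw [hm2] at hdv
                rcases (Nat.dvd_prime Nat.prime_two).mp hdv with h' | h'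
                · exact absurd h' (hord1 u)
                · exact h'
            exact no_two_of_order hG d2 tot2 (leafH a hva3) (leafH b hvb3)
              (Subtype.coe_ne_coe.mpr hab)
        · by_cases hv3 : orderOf (v : G) = 3
          · have leaf36 : ∀ u : {g : G // g ≠ 1},
                Nat.gcd (orderOf (v : G)) (orderOf (u : G)) ≠ 1 →
                orderOf (u : G) = 3 ∨ orderOf (u : G) = 6 := by
              intro u hg
              have h3d : 3 ∣ orderOf (u : G) := by
                rw [hv3] at hg
                have hd3 : Nat.gcd 3 (orderOf (u : G)) ∣ 3 := Nat.gcd_dvd_left _ _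
                rcases (Nat.dvd_prime Nat.prime_three).mp hd3 with h' | h'
                · exact absurd h' hg
                · exact h' ▸ Nat.gcd_dvd_right _ _
              rcases hdvd6 u with h2 | h3 | h66
              · rw [h2] at h3d; omega
              · exact Or.inl h3
              · exact Or.inr h66
            have mix : ∀ {s t : {g : G // g ≠ 1}}, s ≠ t →
                ¬ (genNonCoprimeGraph G H).Adj s t →
                (orderOf (s : G) = 3 → orderOf (t : G) = 6 → False) ∧
                (orderOf (s : G) = 6 → orderOf (t : G) = 3 → False) := by
              intro s t hst hnadj
              constructor
              · intro h3 h66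
                exact hnadj ⟨hst, by rw [h3, h66]; norm_num,
                  Or.inl ((hmem _).mpr (by rw [h3, hm3]))⟩
              · intro h66 h3
                exact hnadj ⟨hst, by rw [h66, h3]; norm_num,
                  Or.inr ((hmem _).mpr (by rw [h3, hm3]))⟩
            rcases leaf36 a hva2 with ha3 | ha6 <;> rcases leaf36 b hvb2 with hb3 | hb6 <;>
              rcases leaf36 c hvc2 with hc3 | hc6
            · exact no_three_of_order hG d3 tot3 hv3 ha3 hb3 (Subtype.coe_ne_coe.mpr hva1)
                (Subtype.coe_ne_coe.mpr hvb1) (Subtype.coe_ne_coe.mpr hab)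
            · exact no_three_of_order hG d3 tot3 hv3 ha3 hb3 (Subtype.coe_ne_coe.mpr hva1)
                (Subtype.coe_ne_coe.mpr hvb1) (Subtype.coe_ne_coe.mpr hab)
            · exact (mix hab hnab).1 ha3 hb6
            · exact (mix hab hnab).1 ha3 hb6
            · exact (mix hab hnab).2 ha6 hb3
            · exact (mix hab hnab).2 ha6 hb3
            · exact (mix hac hnac).2 ha6 hc3
            · exact no_three_of_order hG d6 tot6 ha6 hb6 hc6 (Subtype.coe_ne_coe.mpr hab)
                (Subtype.coe_ne_coe.mpr hac) (Subtype.coe_ne_coe.mpr hbc)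
          · have leafH3 : ∀ u : {g : G // g ≠ 1},
                ((v : G) ∈ H ∨ (u : G) ∈ H) → orderOf (u : G) = 3 := by
              intro u hor
              rcases hor with h | h
              · exfalso
                have hdv := (hmem _).mp h; rw [hm3] at hdv
                rcases (Nat.dvd_prime Nat.prime_three).mp hdv with h' | h'
                · exact hord1 v h'
                · exact hv3 h'
              · have hdv := (hmem _).mp h; rw [hm3] at hdv
                rcases (Nat.dvd_prime Nat.prime_three).mp hdv with h' | h'
                · exact absurd h' (hord1 u)
                · exact h'
            exact no_three_of_order hG d3 tot3 (leafH3 a hva3) (leafH3 b hvb3)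
              (leafH3 c hvc3) (Subtype.coe_ne_coe.mpr hab) (Subtype.coe_ne_coe.mpr hac)
              (Subtype.coe_ne_coe.mpr hbc)
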